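/- If the minimum min_j w̃_j^T x̃ is attained at a unique index, then as γ → ∞, the mixture posterior p_Θ(y|x) = Σ_{k=1}^K g_k(x,Θ) σ(y w̃_k^T x̃) converges to σ(y · min_{j∈{1,…,K}} w̃_j^T x̃), where σ(a) = 1/(1+e^{-a}). -/
import Mathlib


noncomputable def sig (a : ℝ) : ℝ := 1 / (1 + Real.exp (-a))

/-- if the minimum of the linear scores is attained at a unique index,
then as γ → ∞ the mixture posterior tends to σ(y · min_j w̃_j^T x̃). -/
theorem mixture_posterior_limit (K d : ℕ)
    (w : Fin K → Fin (d + 1) → ℝ) (x : Fin (d + 1) → ℝ)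
    (y : ℝ) (hy : y = 1 ∨ y = -1)
    (g : ℝ → Fin K → ℝ)
    (hg : ∀ γ k, g γ k = Real.exp (-γ * ∑ i, w k i * x i) /
      ∑ j, Real.exp (-γ * ∑ i, w j i * x i))
    (k0 : Fin K)
    (hmin : ∀ j, j ≠ k0 → (∑ i, w k0 i * x i) < ∑ i, w j i * x i) :
    Filter.Tendsto (fun γ => ∑ k, g γ k * sig (y * ∑ i, w k i * x i))
      Filter.atTop
      (nhds (sig (y * Finset.univ.inf' ⟨k0, Finset.mem_univ k0⟩
        (fun j => ∑ i, w j i * x i)))) := by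
  set s : Fin K → ℝ := fun j => ∑ i, w j i * x i with hs
  have hK : (Finset.univ : Finset (Fin K)).Nonempty := ⟨k0, Finset.mem_univ k0⟩
  have hinf : (Finset.univ.inf' ⟨k0, Finset.mem_univ k0⟩
      (fun j => ∑ i, w j i * x i)) = s k0 := by
    apply le_antisymm
    · exact Finset.inf'_le _ (Finset.mem_univ k0)
    · apply Finset.le_inf'
      intro j _
      by_cases h : j = k0
      · subst h; exact le_refl _
      · exact (hmin j h).le
  rw [hinf]
  have hgeq : ∀ γ k, g γ k =
      Real.exp (-γ * (s k - s k0)) / ∑ j, Real.exp (-γ * (s j - s k0)) := by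
    intro γ k
    rw [hg]
    have h1 : ∀ j, Real.exp (-γ * (s j - s k0)) =
        Real.exp (-γ * s j) * Real.exp (γ * s k0) := by
      intro j; rw [← Real.exp_add]; ring_nf
    simp_rw [h1, ← Finset.sum_mul]
    rw [mul_div_mul_right _ _ (Real.exp_ne_zero _)]
  have hterm : ∀ j : Fin K, Filter.Tendsto (fun γ : ℝ => Real.exp (-γ * (s j - s k0)))
      Filter.atTop (nhds (if j = k0 then 1 else 0)) := by
    intro j
    by_cases h : j = k0
    · subst h; simp
    · simp only [h, if_false]
      have hc : 0 < s j - s k0 := sub_pos.2 (hmin j h)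
      have h2 : Filter.Tendsto (fun γ : ℝ => γ * (s j - s k0)) Filter.atTop Filter.atTop :=
        Filter.Tendsto.atTop_mul_const hc Filter.tendsto_id
      have heq : (fun γ : ℝ => Real.exp (-γ * (s j - s k0))) =
          (fun x => Real.exp (-x)) ∘ (fun γ : ℝ => γ * (s j - s k0)) :=
        funext fun γ => by simp [neg_mul]
      rw [heq]
      exact Real.tendsto_exp_neg_atTop_nhds_zero.comp h2
  have hden : Filter.Tendsto (fun γ : ℝ => ∑ j, Real.exp (-γ * (s j - s k0)))
      Filter.atTop (nhds 1) := by
    have := tendsto_finset_sum Finset.univ (fun j _ => hterm j)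
    simpa [Finset.sum_ite_eq'] using this
  have hlim : ∀ k : Fin K, Filter.Tendsto (fun γ => g γ k) Filter.atTop
      (nhds (if k = k0 then 1 else 0)) := by
    intro k
    have := (hterm k).div hden one_ne_zero
    simp only [div_one] at this
    exact this.congr (fun γ => (hgeq γ k).symm)
  have hsum := tendsto_finset_sum (Finset.univ : Finset (Fin K))
    (fun k _ => (hlim k).mul (tendsto_const_nhds (x := sig (y * s k))))
  simpa [ite_mul, Finset.sum_ite_eq'] using hsum
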